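/- In the automaton group of automaton 882, the element g = acacbc satisfies, for all n ≥ 1: g^{2^n}(0^{2n+1}) = 0^{2n+1} and g^{2^n}|_{0^{2n+1}} = cacb. Consequently g^{2^n}(0^∞) = 0^{2n+1}·1·1·0^∞ for all n ≥ 1, and g has infinite order. -/

import Mathlib

namespace Stmt9


/-- A Mealy automaton over the binary alphabet with state set `S`. -/
structure Mealy (S : Type) where
  /-- transition function -/
  δ : S → Bool → S
  /-- output function -/
  τ : S → Bool → Bool

namespace Mealy

variable {S : Type} (M : Mealy S)

/-- The state reached from `q` after reading the first `n` letters of `w`. -/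
def stateAt (q : S) (w : ℕ → Bool) : ℕ → S
  | 0 => q
  | n + 1 => M.δ (stateAt q w n) (w n)

/-- The action of state `q` on infinite words. -/
def act (q : S) (w : ℕ → Bool) : ℕ → Bool :=
  fun n => M.τ (M.stateAt q w n) (w n)

/-- The inverse automaton (for automata whose output functions are involutions). -/
def inv : Mealy S := ⟨fun q b => M.δ q (M.τ q b), M.τ⟩

theorem stateAt_inv_act (h : ∀ q b, M.τ q (M.τ q b) = b) (q : S) (w : ℕ → Bool) :
    ∀ n, M.inv.stateAt q (M.act q w) n = M.stateAt q w n := by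
  intro n
  induction n with
  | zero => rfl
  | succ n ih =>
    show M.inv.δ (M.inv.stateAt q (M.act q w) n) (M.act q w n) = M.δ (M.stateAt q w n) (w n)
    rw [ih]
    show M.δ (M.stateAt q w n) (M.τ (M.stateAt q w n) (M.τ (M.stateAt q w n) (w n))) = _
    rw [h]

theorem inv_act (h : ∀ q b, M.τ q (M.τ q b) = b) (q : S) (w : ℕ → Bool) :
    M.inv.act q (M.act q w) = w := by
  funext n
  show M.inv.τ (M.inv.stateAt q (M.act q w) n) (M.act q w n) = w n
  rw [stateAt_inv_act M h]
  show M.τ (M.stateAt q w n) (M.τ (M.stateAt q w n) (w n)) = w n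
  rw [h]

theorem inv_inv (h : ∀ q b, M.τ q (M.τ q b) = b) : M.inv.inv = M := by
  obtain ⟨d, t⟩ := M
  simp only [inv]
  congr 1
  funext q b
  exact congrArg (d q) (h q b)

/-- The permutation of the set of infinite binary words defined by state `q`. -/
def perm (h : ∀ q b, M.τ q (M.τ q b) = b) (q : S) : Equiv.Perm (ℕ → Bool) where
  toFun := M.act q
  invFun := M.inv.act q
  left_inv := fun w => M.inv_act h q w
  right_inv := fun w => by
    have h2 : ∀ q b, M.inv.τ q (M.inv.τ q b) = b := h
    have := M.inv.inv_act h2 q w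
    rwa [M.inv_inv h] at this

end Mealy

/-- Prepend a finite word to an infinite word. -/
def cat (u : List Bool) (w : ℕ → Bool) : ℕ → Bool :=
  fun n => u.getD n (w (n - u.length))

/-- The (semantic) restriction of a transformation of infinite words to the
subtree indexed by the finite word `u`. -/
def resW (f : (ℕ → Bool) → ℕ → Bool) (u : List Bool) : (ℕ → Bool) → ℕ → Bool :=
  fun w n => f (cat u w) (n + u.length)

/-- The periodic infinite word with period `u`. -/
def per (u : List Bool) : ℕ → Bool := fun n => u.getD (n % u.length) false

/-- Left-shift equivalence of infinite words: they share a common infinite tail. -/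
def seq (u v : ℕ → Bool) : Prop := ∃ k l : ℕ, ∀ n, u (n + k) = v (n + l)

inductive St : Type
  | a | b | c
deriving DecidableEq

instance : Fintype St := ⟨{St.a, St.b, St.c}, fun x => by cases x <;> simp⟩

/-- Automaton 882. -/
def M : Mealy St where
  δ := fun q x => match q, x with
    | .a, false => .c | .a, true => .c
    | .b, false => .b | .b, true => .c
    | .c, false => .b | .c, true => .a
  τ := fun q x => match q with
    | .a => !x
    | .b => x
    | .c => x

theorem M_inv : ∀ q x, M.τ q (M.τ q x) = x := by decide

/-- The automorphism of the binary tree boundary defined by state `a`. -/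
def a : Equiv.Perm (ℕ → Bool) := M.perm M_inv .a

/-- The automorphism of the binary tree boundary defined by state `b`. -/
def b : Equiv.Perm (ℕ → Bool) := M.perm M_inv .b

/-- The automorphism of the binary tree boundary defined by state `c`. -/
def c : Equiv.Perm (ℕ → Bool) := M.perm M_inv .c


/-- Prepend one bit to an infinite word. -/
def cons (i : Bool) (w : ℕ → Bool) : ℕ → Bool
  | 0 => i
  | n + 1 => w n

lemma cons_eta (w : ℕ → Bool) : cons (w 0) (fun n => w (n + 1)) = w := by
  funext n; cases n <;> rfl

lemma stateAt_cons (q : St) (i : Bool) (w : ℕ → Bool) :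
    ∀ n, M.stateAt q (cons i w) (n + 1) = M.stateAt (M.δ q i) w n := by
  intro n
  induction n with
  | zero => rfl
  | succ n ih =>
    show M.δ (M.stateAt q (cons i w) (n + 1)) (cons i w (n + 1)) = _
    rw [ih]; rfl

lemma act_cons (q : St) (i : Bool) (w : ℕ → Bool) :
    M.act q (cons i w) = cons (M.τ q i) (M.act (M.δ q i) w) := by
  funext n
  cases n with
  | zero => rfl
  | succ n =>
    show M.τ (M.stateAt q (cons i w) (n + 1)) (w n) = M.act (M.δ q i) w n
    rw [stateAt_cons]; rfl

lemma a_def (w : ℕ → Bool) : a w = M.act .a w := rfl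
lemma b_def (w : ℕ → Bool) : b w = M.act .b w := rfl
lemma c_def (w : ℕ → Bool) : c w = M.act .c w := rfl

lemma aF (w : ℕ → Bool) : a (cons false w) = cons true (c w) := act_cons .a false w
lemma aT (w : ℕ → Bool) : a (cons true w) = cons false (c w) := act_cons .a true w
lemma bF (w : ℕ → Bool) : b (cons false w) = cons false (b w) := act_cons .b false w
lemma bT (w : ℕ → Bool) : b (cons true w) = cons true (c w) := act_cons .b true w
lemma cF (w : ℕ → Bool) : c (cons false w) = cons false (b w) := act_cons .c false w
lemma cT (w : ℕ → Bool) : c (cons true w) = cons true (a w) := act_cons .c true w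


lemma sq_aux : ∀ n : ℕ, ∀ w : ℕ → Bool,
    a (a w) n = w n ∧ b (b w) n = w n ∧ c (c w) n = w n := by
  intro n
  induction n with
  | zero =>
    intro w
    rw [← cons_eta w]
    cases w 0 <;>
      simp only [aF, aT, bF, bT, cF, cT] <;> exact ⟨rfl, rfl, rfl⟩
  | succ n ih =>
    intro w
    rw [← cons_eta w]
    cases w 0 <;> simp only [aF, aT, bF, bT, cF, cT]
    · exact ⟨(ih _).2.2, (ih _).2.1, (ih _).2.1⟩
    · exact ⟨(ih _).2.2, (ih _).2.2, (ih _).1⟩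

lemma a_sq (w : ℕ → Bool) : a (a w) = w := funext fun n => (sq_aux n w).1
lemma b_sq (w : ℕ → Bool) : b (b w) = w := funext fun n => (sq_aux n w).2.1
lemma c_sq (w : ℕ → Bool) : c (c w) = w := funext fun n => (sq_aux n w).2.2

/-- The restriction `cacb` as a plain function. -/
def hf (w : ℕ → Bool) : ℕ → Bool := c (a (c (b w)))

lemma g_apply (w : ℕ → Bool) :
    (a * c * a * c * b * c) (cons false w) = cons false (hf w) := by
  simp only [Equiv.Perm.mul_apply, cF, bF, aF, cT, aT, b_sq, hf]

lemma hf_F (w : ℕ → Bool) : hf (cons false w) = cons true (a (c w)) := by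
  simp only [hf, bF, cF, b_sq, aF, cT]

lemma hf_T (w : ℕ → Bool) : hf (cons true w) = cons false (b (c (a (c w)))) := by
  simp only [hf, bT, cT, aT, cF]

lemma hf_hf (w : ℕ → Bool) :
    hf (hf (cons false (cons false w))) = cons false (cons false (hf w)) := by
  rw [hf_F, hf_T]
  simp only [cF, aF, cT, aT, bF, b_sq, hf]

lemma cat_nil (w : ℕ → Bool) : cat [] w = w := by
  funext n; simp [cat]

lemma cat_cons (x : Bool) (u : List Bool) (w : ℕ → Bool) :
    cat (x :: u) w = cons x (cat u w) := by
  funext n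
  cases n with
  | zero => rfl
  | succ n => simp [cat, cons, Nat.succ_sub_succ]

lemma cat_append (u v : List Bool) (w : ℕ → Bool) :
    cat (u ++ v) w = cat u (cat v w) := by
  induction u with
  | nil => simp [cat_nil]
  | cons x u ih => simp [cat_cons, ih]

lemma rep_shift (k : ℕ) (w : ℕ → Bool) :
    cat (List.replicate (k + 1) false) w = cat (List.replicate k false) (cons false w) := by
  induction k with
  | zero => simp [List.replicate, cat_cons, cat_nil]
  | succ k ih =>
    rw [List.replicate_succ, cat_cons, ih, List.replicate_succ, cat_cons]

lemma zeros_eq : (fun _ => false : ℕ → Bool) = cons false (fun _ => false) := by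
  funext n; cases n <;> rfl

lemma cat_zeros (k : ℕ) :
    cat (List.replicate k false) (fun _ => false) = (fun _ => false) := by
  induction k with
  | zero => simp [cat_nil]
  | succ k ih => rw [List.replicate_succ, cat_cons, ih, ← zeros_eq]

lemma bc_zeros_aux : ∀ n : ℕ,
    b (fun _ => false) n = false ∧ c (fun _ => false) n = false := by
  intro n
  induction n with
  | zero => rw [zeros_eq]; simp only [bF, cF]; exact ⟨rfl, rfl⟩
  | succ n ih => rw [zeros_eq]; simp only [bF, cF]; exact ⟨ih.1, ih.1⟩

lemma b_zeros : b (fun _ => false) = (fun _ => false) :=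
  funext fun n => (bc_zeros_aux n).1

lemma c_zeros : c (fun _ => false) = (fun _ => false) :=
  funext fun n => (bc_zeros_aux n).2

lemma a_zeros : a (fun _ => false) = cons true (fun _ => false) := by
  conv_lhs => rw [zeros_eq]
  rw [aF, c_zeros]

lemma hf_zeros : hf (fun _ => false) = cons true (cons true (fun _ => false)) := by
  conv_lhs => rw [zeros_eq]
  rw [hf_F, c_zeros, a_zeros]

lemma cacb_apply (w : ℕ → Bool) : (c * a * c * b) w = hf w := by
  simp only [Equiv.Perm.mul_apply]; rfl

lemma iter2 : ∀ q : ℕ, ∀ w : ℕ → Bool,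
    hf^[2 * q] (cons false (cons false w)) = cons false (cons false (hf^[q] w)) := by
  intro q
  induction q with
  | zero => intro w; rfl
  | succ q ih =>
    intro w
    have e : 2 * (q + 1) = 2 * q + 2 := by ring
    rw [e, Function.iterate_add_apply]
    have e2 : hf^[2] (cons false (cons false w)) = cons false (cons false (hf w)) := hf_hf w
    rw [e2, ih, ← Function.iterate_succ_apply]

lemma iter2_zeros (q : ℕ) :
    hf^[2 * q] (fun _ => false) = cons false (cons false (hf^[q] (fun _ => false))) := by
  conv_lhs => rw [zeros_eq, zeros_eq]
  rw [iter2]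

lemma hf_iter_ne : ∀ m : ℕ, 1 ≤ m → hf^[m] (fun _ => false) ≠ (fun _ => false) := by
  intro m
  induction m using Nat.strong_induction_on with
  | _ m ih =>
    intro hm
    rcases Nat.even_or_odd m with ⟨q, hq⟩ | ⟨q, hq⟩
    · -- m = q + q, q ≥ 1
      have hq2 : m = 2 * q := by omega
      have hq1 : 1 ≤ q := by omega
      intro hcon
      rw [hq2, iter2_zeros] at hcon
      apply ih q (by omega) hq1
      funext n
      have := congrFun hcon (n + 2)
      exact this
    · -- m = 2q + 1
      have e : hf^[2 * q + 1] (fun _ => false) = hf (hf^[2 * q] (fun _ => false)) :=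
        Function.iterate_succ_apply' hf (2 * q) _
      rw [hq, e, iter2_zeros, hf_F]
      intro hcon
      have h0 := congrFun hcon 0
      simp [cons] at h0

lemma gpow_cons : ∀ n : ℕ, ∀ w : ℕ → Bool,
    ((a * c * a * c * b * c) ^ n) (cons false w) = cons false (hf^[n] w) := by
  intro n
  induction n with
  | zero => intro w; rfl
  | succ n ih =>
    intro w
    rw [pow_succ, Equiv.Perm.mul_apply, g_apply, ih, ← Function.iterate_succ_apply]

lemma main_fix : ∀ n : ℕ, 1 ≤ n → ∀ w : ℕ → Bool,
    ((a * c * a * c * b * c) ^ 2 ^ n) (cat (List.replicate (2 * n + 1) false) w) =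
      cat (List.replicate (2 * n + 1) false) (hf w) := by
  intro n hn
  induction n, hn using Nat.le_induction with
  | base =>
    intro w
    have e3 : (2 * 1 + 1) = 3 := by norm_num
    have hrep : cat (List.replicate 3 false) w
        = cons false (cons false (cons false w)) := by
      show cat (false :: false :: false :: []) w = _
      rw [cat_cons, cat_cons, cat_cons, cat_nil]
    have hrep' : cat (List.replicate 3 false) (hf w)
        = cons false (cons false (cons false (hf w))) := by
      show cat (false :: false :: false :: []) _ = _
      rw [cat_cons, cat_cons, cat_cons, cat_nil]
    rw [e3, hrep, hrep', pow_one, pow_two, Equiv.Perm.mul_apply, g_apply, g_apply, hf_hf]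
  | succ n hn ih =>
    intro w
    have e : (2 : ℕ) ^ (n + 1) = 2 ^ n * 2 := by ring
    have erep : ∀ v : ℕ → Bool, cat (List.replicate (2 * (n + 1) + 1) false) v
        = cat (List.replicate (2 * n + 1) false) (cons false (cons false v)) := by
      intro v
      have e1 : 2 * (n + 1) + 1 = (2 * n + 1) + 1 + 1 := by ring
      rw [e1, rep_shift, rep_shift]
    rw [e, pow_mul, pow_two, Equiv.Perm.mul_apply, erep, ih, ih, hf_hf, ← erep]

/-- In the automaton group of automaton 882, for `g = acacbc` and all `n ≥ 1`:
`g^(2^n)` fixes `0^(2n+1)` with restriction `cacb` there, so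
`g^(2^n)(0^∞) = 0^(2n+1) 1 1 0^∞`; hence `g` has infinite order. -/
theorem automaton882_acacbc :
    (∀ n : ℕ, 1 ≤ n →
      (∀ w : ℕ → Bool,
        ((a * c * a * c * b * c) ^ 2 ^ n) (cat (List.replicate (2 * n + 1) false) w) =
          cat (List.replicate (2 * n + 1) false) ((c * a * c * b) w)) ∧
      ((a * c * a * c * b * c) ^ 2 ^ n) (fun _ => false) =
        cat (List.replicate (2 * n + 1) false ++ [true, true]) (fun _ => false)) ∧
    (∀ n : ℕ, 1 ≤ n → (a * c * a * c * b * c) ^ n ≠ 1) := by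
  constructor
  · intro n hn
    constructor
    · intro w
      rw [cacb_apply]
      exact main_fix n hn w
    · have h1 : ((a * c * a * c * b * c) ^ 2 ^ n) (fun _ => false)
          = cat (List.replicate (2 * n + 1) false) (hf (fun _ => false)) := by
        conv_lhs => rw [← cat_zeros (2 * n + 1)]
        exact main_fix n hn _
      rw [h1, hf_zeros, cat_append, cat_cons, cat_cons, cat_nil]
  · intro n hn hcon
    have h1 : ((a * c * a * c * b * c) ^ n) (fun _ => false) = (fun _ => false) := by
      rw [hcon]; rfl
    rw [zeros_eq] at h1
    rw [gpow_cons] at h1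
    apply hf_iter_ne n hn
    funext k
    exact congrFun h1 (k + 1)

end Stmt9
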